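/- Under the sufficiently-large-penalty condition (L_i > θ_i + Σ_{j∈N⁻(i)} ξ_{ji} for all i), the Shapley value allocation Φ_i = θ_i + Σ_{j ∈ N⁻(i)} ξ_{ji}/2 − Σ_{j ∈ N⁺(i)} ξ_{ij}/2 lies in the core of the game c(S) = Σ_{i ∈ S}(θ_i + Σ_{j ∈ N⁻(i), j ∉ S} ξ_{ji}). -/

import Mathlib

open Finset

/-- In-neighbors of `i`: players `j` with an arc `(j, i)`. -/
def inN {V : Type*} [Fintype V] (A : V → V → Prop) [DecidableRel A] (i : V) : Finset V :=
  Finset.univ.filter fun j => A j i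

/-- Out-neighbors of `i`: players `j` with an arc `(i, j)`. -/
def outN {V : Type*} [Fintype V] (A : V → V → Prop) [DecidableRel A] (i : V) : Finset V :=
  Finset.univ.filter fun j => A i j

/-- Under sufficiently large penalties all coalition members secure themselves,
so the coalition cost is `c(S) = Σ_{i∈S}(θ_i + Σ_{j∈N⁻(i), j∉S} ξ_{ji})`. -/
noncomputable def cBig {V : Type*} [Fintype V] [DecidableEq V]
    (A : V → V → Prop) [DecidableRel A] (θ : V → ℝ) (ξ : V → V → ℝ)
    (S : Finset V) : ℝ :=
  ∑ i ∈ S, (θ i + ∑ j ∈ inN A i \ S, ξ j i)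

/-- The Shapley value allocation under large penalties:
`Φ_i = θ_i + Σ_{j∈N⁻(i)} ξ_{ji}/2 − Σ_{j∈N⁺(i)} ξ_{ij}/2`. -/
noncomputable def phiBig {V : Type*} [Fintype V] (A : V → V → Prop) [DecidableRel A]
    (θ : V → ℝ) (ξ : V → V → ℝ) (i : V) : ℝ :=
  θ i + (∑ j ∈ inN A i, ξ j i) / 2 - (∑ j ∈ outN A i, ξ i j) / 2

lemma inN_inter {V : Type*} [Fintype V] [DecidableEq V] (A : V → V → Prop) [DecidableRel A]
    (i : V) (S : Finset V) : inN A i ∩ S = S.filter (fun j => A j i) := by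
  ext j; simp [inN, and_comm]

lemma outN_inter {V : Type*} [Fintype V] [DecidableEq V] (A : V → V → Prop) [DecidableRel A]
    (i : V) (S : Finset V) : outN A i ∩ S = S.filter (fun j => A i j) := by
  ext j; simp [outN, and_comm]

lemma swap_sum {V : Type*} [Fintype V] [DecidableEq V] (A : V → V → Prop) [DecidableRel A]
    (ξ : V → V → ℝ) (S : Finset V) :
    ∑ i ∈ S, ∑ j ∈ inN A i ∩ S, ξ j i = ∑ j ∈ S, ∑ i ∈ outN A j ∩ S, ξ j i := by
  simp only [inN_inter, outN_inter, Finset.sum_filter]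
  exact Finset.sum_comm

theorem shapley_in_core_large_penalties {V : Type*} [Fintype V] [DecidableEq V]
    (A : V → V → Prop) [DecidableRel A] (θ L : V → ℝ) (ξ : V → V → ℝ)
    (hθ : ∀ i, 0 ≤ θ i) (hξ : ∀ i j, 0 ≤ ξ i j)
    (hbig : ∀ i, θ i + ∑ j ∈ inN A i, ξ j i < L i) :
    (∑ i, phiBig A θ ξ i = cBig A θ ξ Finset.univ) ∧
    (∀ S : Finset V, ∑ i ∈ S, phiBig A θ ξ i ≤ cBig A θ ξ S) := by
  have key : ∀ S : Finset V, ∑ i ∈ S, phiBig A θ ξ i - cBig A θ ξ S =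
      ((∑ i ∈ S, ∑ j ∈ inN A i ∩ S, ξ j i) - (∑ i ∈ S, ∑ j ∈ inN A i \ S, ξ j i)
        - ∑ i ∈ S, ∑ j ∈ outN A i, ξ i j) / 2 := by
    intro S
    have hsplit : ∀ i, ∑ j ∈ inN A i, ξ j i =
        ∑ j ∈ inN A i ∩ S, ξ j i + ∑ j ∈ inN A i \ S, ξ j i := fun i =>
      (Finset.sum_inter_add_sum_sdiff (inN A i) S (fun j => ξ j i)).symm
    have hS : ∑ i ∈ S, ∑ j ∈ inN A i, ξ j i =
        ∑ i ∈ S, ∑ j ∈ inN A i ∩ S, ξ j i + ∑ i ∈ S, ∑ j ∈ inN A i \ S, ξ j i := by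
      rw [← Finset.sum_add_distrib]
      exact Finset.sum_congr rfl fun i _ => hsplit i
    simp only [phiBig, cBig, Finset.sum_sub_distrib, Finset.sum_add_distrib]
    simp only [← Finset.sum_div]
    rw [hS]
    ring
  constructor
  · have h := key Finset.univ
    have h2 : ∑ i ∈ Finset.univ, ∑ j ∈ inN A i ∩ Finset.univ, ξ j i =
        ∑ i ∈ Finset.univ, ∑ j ∈ outN A i, ξ i j := by
      rw [swap_sum A ξ Finset.univ]
      simp [Finset.inter_univ]
    have h3 : ∑ i ∈ Finset.univ, ∑ j ∈ inN A i \ Finset.univ, ξ j i = 0 := by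
      have : ∀ i : V, inN A i \ (Finset.univ : Finset V) = ∅ := fun i => Finset.sdiff_eq_empty_iff_subset.mpr (Finset.subset_univ _)
      simp [this]
    linarith [h, h2, h3]
  · intro S
    have h := key S
    have hle1 : ∑ i ∈ S, ∑ j ∈ inN A i ∩ S, ξ j i ≤ ∑ i ∈ S, ∑ j ∈ outN A i, ξ i j := by
      rw [swap_sum A ξ S]
      refine Finset.sum_le_sum fun j _ => ?_
      exact Finset.sum_le_sum_of_subset_of_nonneg (Finset.inter_subset_left)
        (fun i _ _ => hξ j i)
    have hnn : 0 ≤ ∑ i ∈ S, ∑ j ∈ inN A i \ S, ξ j i :=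
      Finset.sum_nonneg fun i _ => Finset.sum_nonneg fun j _ => hξ j i
    nlinarith [key S]
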